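/- Let c be an admissible coefficient function satisfying (Cubic values). Let i_1 ≠ i_2 and let γ = e_{i_1,j_1}+e_{i_1,j_1′}+e_{i_2,j_2}+e_{i_2,j_2′} ∈ ℤ^{μ_A−2}. If a_{i_1} ≥ 3 and j_1′ ≥ 2, then c(γ,0) = 0. -/

import Mathlib

/- Common framework: Frobenius manifolds for orbifold projective lines ℙ¹_A,
   following Ishibashi–Shiraishi–Takahashi. -/

namespace FrobeniusUniqueness

/-- A point index `(i, j)` labelling a flat coordinate `t_{i,j}`. -/
abbrev Pt : Type := Fin 3 × ℕ

/-- A non-negative element of `ℤ^{μ_A − 2}`: an exponent vector `α` with `α_{i,j} ∈ ℕ`. -/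
abbrev Expv : Type := Pt →₀ ℕ

/-- The standard basis vector `e_{i,j}`. -/
noncomputable def e (i : Fin 3) (j : ℕ) : Expv := Finsupp.single (i, j) 1

/-- The length `|α|` of an exponent vector. -/
def len (α : Expv) : ℕ := α.sum fun _ n => n

/-- A point index `(i,j)` is valid if `1 ≤ j ≤ a_i − 1`. -/
def ValidPt (A : Fin 3 → ℕ) (p : Pt) : Prop := 1 ≤ p.2 ∧ p.2 ≤ A p.1 - 1

/-- An exponent vector lies in `ℤ^{μ_A − 2}` iff it is supported on valid indices. -/
def Valid (A : Fin 3 → ℕ) (α : Expv) : Prop := ∀ p ∈ α.support, ValidPt A p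

/-- The combinatorial factor `s_{a,b,c}`. -/
def sFactor (a b c : ℕ) : ℂ :=
  if a = b ∧ b = c then 6
  else if a ≠ b ∧ b ≠ c ∧ a ≠ c then 1
  else 2

/-- The index type for the flat coordinates `t_1`, `t_{i,j}`, `t_{μ_A}`. -/
inductive Idx : Type where
  | one : Idx
  | pt : Fin 3 → ℕ → Idx
  | mu : Idx
deriving DecidableEq

/-- Validity of a flat coordinate index. -/
def ValidIdx (A : Fin 3 → ℕ) : Idx → Prop
  | .one => True
  | .pt i j => ValidPt A (i, j)
  | .mu => True

/-- The metric `η` in the frame `∂_1, ∂_{i,j}, ∂_{μ_A}`. -/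
noncomputable def eta (A : Fin 3 → ℕ) : Idx → Idx → ℂ
  | .one, .mu => 1
  | .mu, .one => 1
  | .pt i j, .pt i' j' =>
      if i = i' ∧ j + j' = A i ∧ 1 ≤ j ∧ j ≤ A i - 1 then (A i : ℂ)⁻¹ else 0
  | _, _ => 0

/-- The point indices occurring in an `Idx`. -/
def ptsOf : Idx → List Pt
  | .pt i j => [(i, j)]
  | _ => []

/-- The number of occurrences of `μ_A` in an `Idx`. -/
def muCount : Idx → ℕ
  | .mu => 1
  | _ => 0

/-- The factor produced when the monomial `t^{β + Σ_{p ∈ ps} e_p}` is differentiated by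
`∏_{p ∈ ps} ∂_p`, leaving the monomial `t^β`. -/
noncomputable def dfac (β : Expv) : List Pt → ℕ
  | [] => 1
  | p :: ps =>
      ((β + ((ps.map fun q => (Finsupp.single q 1 : Expv)).sum) + Finsupp.single p 1 : Expv) p)
        * dfac β ps

/-- `der A c a b d β m` is the coefficient of `t^β · e^{m·t_{μ_A}}` in `∂_a ∂_b ∂_d F`, where
`F = (1/2)t_1²t_{μ_A} + (1/2)t_1·Σ_{i,j}(1/a_i)t_{i,j}t_{i,a_i−j} + Σ_{α,m} c(α,m)t^α e^{m t_{μ_A}}`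
is the potential of the coefficient function `c`.  In particular `∂_1∂_a∂_b F = η(∂_a,∂_b)`. -/
noncomputable def der (A : Fin 3 → ℕ) (c : Expv → ℕ → ℂ) (a b d : Idx) (β : Expv) (m : ℕ) : ℂ :=
  if a = .one then (if β = 0 ∧ m = 0 then eta A b d else 0)
  else if b = .one then (if β = 0 ∧ m = 0 then eta A a d else 0)
  else if d = .one then (if β = 0 ∧ m = 0 then eta A a b else 0)
  else
    (m : ℂ) ^ (muCount a + muCount b + muCount d) *
      (dfac β (ptsOf a ++ ptsOf b ++ ptsOf d) : ℂ) *
      c (β + (((ptsOf a ++ ptsOf b ++ ptsOf d).map fun q => (Finsupp.single q 1 : Expv)).sum)) m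

/-- The coefficient of `t^β · e^{m·t_{μ_A}}` in
`Σ_{σ,τ} ∂_a∂_b∂_σF · η^{στ} · ∂_τ∂_d∂_e F`, where `(η^{στ})` is the inverse matrix of
`(η_{στ})` (so the only nonzero entries are `η^{1,μ_A} = η^{μ_A,1} = 1` and
`η^{(i,j),(i,a_i−j)} = a_i`). -/
noncomputable def quadTerm (A : Fin 3 → ℕ) (c : Expv → ℕ → ℂ) (a b d e' : Idx)
    (β : Expv) (m : ℕ) : ℂ :=
  ∑ x ∈ Finset.HasAntidiagonal.antidiagonal β, ∑ y ∈ Finset.HasAntidiagonal.antidiagonal m,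
    (der A c a b .one x.1 y.1 * der A c .mu d e' x.2 y.2
     + der A c a b .mu x.1 y.1 * der A c .one d e' x.2 y.2
     + ∑ i : Fin 3, ∑ j ∈ Finset.Icc 1 (A i - 1),
         (A i : ℂ) * der A c a b (.pt i j) x.1 y.1 * der A c (.pt i (A i - j)) d e' x.2 y.2)

/-- `χ_A = 1/a_1 + 1/a_2 + 1/a_3 − 1`. -/
noncomputable def chi (A : Fin 3 → ℕ) : ℚ := (A 0 : ℚ)⁻¹ + (A 1 : ℚ)⁻¹ + (A 2 : ℚ)⁻¹ - 1

/-- The degree of the monomial `t^α`: `Σ_{i,j} α_{i,j}·(a_i − j)/a_i`. -/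
noncomputable def deg (A : Fin 3 → ℕ) (α : Expv) : ℚ :=
  α.sum fun p n => (n : ℚ) * (((A p.1 : ℚ) - (p.2 : ℚ)) / (A p.1 : ℚ))

/-- A coefficient function is admissible if it satisfies (Homogeneity) and the WDVV
equations (coefficientwise, in the variables `t_{i,j}` and `e^{t_{μ_A}}`). -/
structure IsAdmissible (A : Fin 3 → ℕ) (c : Expv → ℕ → ℂ) : Prop where
  homog : ∀ α : Expv, Valid A α → ∀ m : ℕ, c α m ≠ 0 → deg A α + (m : ℚ) * chi A = 2
  wdvv : ∀ a b d e' : Idx, ValidIdx A a → ValidIdx A b → ValidIdx A d → ValidIdx A e' →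
      ∀ β : Expv, Valid A β → ∀ m : ℕ,
        quadTerm A c a b d e' β m = quadTerm A c a d b e' β m

/-- (Cubic values). -/
def CubicValues (A : Fin 3 → ℕ) (c : Expv → ℕ → ℂ) : Prop :=
  (∀ (i₁ i₂ i₃ : Fin 3) (j₁ j₂ j₃ : ℕ),
      ValidPt A (i₁, j₁) → ValidPt A (i₂, j₂) → ValidPt A (i₃, j₃) →
      ¬(i₁ = i₂ ∧ i₂ = i₃) → c (e i₁ j₁ + e i₂ j₂ + e i₃ j₃) 0 = 0) ∧
  (∀ (i : Fin 3) (j₁ j₂ j₃ : ℕ),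
      ValidPt A (i, j₁) → ValidPt A (i, j₂) → ValidPt A (i, j₃) →
      sFactor j₁ j₂ j₃ * c (e i j₁ + e i j₂ + e i j₃) 0 =
        if j₁ + j₂ + j₃ = A i then (A i : ℂ)⁻¹ else 0)

/-- (Normalization). -/
def Normalization (A : Fin 3 → ℕ) (c : Expv → ℕ → ℂ) : Prop :=
  (2 ≤ A 0 → c (e 0 1 + e 1 1 + e 2 1) 1 = 1) ∧
  (A 0 = 1 → A 0 < A 1 → c (e 1 1 + e 2 1) 1 = 1) ∧
  (A 0 = 1 → A 1 = 1 → A 1 < A 2 → c (e 2 1) 1 = 1) ∧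
  (A 0 = 1 → A 1 = 1 → A 2 = 1 → c 0 1 = 1)

/-- (Separation). -/
def Separation (A : Fin 3 → ℕ) (c : Expv → ℕ → ℂ) : Prop :=
  ∀ γ : Expv, Valid A γ →
    ∀ (i₁ i₂ : Fin 3) (j₁ j₂ : ℕ), i₁ ≠ i₂ → ValidPt A (i₁, j₁) → ValidPt A (i₂, j₂) →
      e i₁ j₁ + e i₂ j₂ ≤ γ → c γ 0 = 0

/-- The automorphism of `ℤ^{μ_A−2}` exchanging `e_{i₁,j}` and `e_{i₂,j}` for all `j`. -/
def swapExp (i₁ i₂ : Fin 3) (α : Expv) : Expv :=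
  Finsupp.equivMapDomain ((Equiv.swap i₁ i₂).prodCongr (Equiv.refl ℕ)) α

/-- (Symmetry). -/
def Symmetry (A : Fin 3 → ℕ) (c : Expv → ℕ → ℂ) : Prop :=
  ∀ i₁ i₂ : Fin 3, A i₁ = A i₂ → ∀ α : Expv, Valid A α → ∀ m : ℕ,
    c (swapExp i₁ i₂ α) m = c α m


section Helpers

lemma sFactor_ne_zero (a b c' : ℕ) : sFactor a b c' ≠ 0 := by
  unfold sFactor; split_ifs <;> norm_num

lemma dfac_pos (β : Expv) (l : List Pt) : 0 < dfac β l := by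
  induction l with
  | nil => simp [dfac]
  | cons p ps ih =>
      unfold dfac
      have h : 0 < (β + ((ps.map fun q => (Finsupp.single q 1 : Expv)).sum)
          + Finsupp.single p 1 : Expv) p := by
        simp [Finsupp.add_apply, Finsupp.single_eq_same]
      exact Nat.mul_pos h ih

lemma dfac_ne_zero (β : Expv) (l : List Pt) : ((dfac β l : ℕ) : ℂ) ≠ 0 := by
  have := dfac_pos β l
  exact_mod_cast Nat.ne_of_gt this

lemma add_eq_single_cases {x y : Expv} {p : Pt} (h : x + y = Finsupp.single p 1) :
    (x = 0 ∧ y = Finsupp.single p 1) ∨ (x = Finsupp.single p 1 ∧ y = 0) := by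
  have hp : x p + y p = 1 := by
    have := DFunLike.congr_fun h p
    simpa [Finsupp.single_eq_same] using this
  have hq : ∀ q : Pt, q ≠ p → x q = 0 ∧ y q = 0 := by
    intro q hqp
    have := DFunLike.congr_fun h q
    simp [Finsupp.single_apply, Ne.symm hqp] at this
    omega
  have hcases : (x p = 0 ∧ y p = 1) ∨ (x p = 1 ∧ y p = 0) := by omega
  rcases hcases with ⟨h1, h2⟩ | ⟨h1, h2⟩
  · left
    constructor
    · ext q
      by_cases hq' : q = p
      · subst hq'; simpa using h1
      · simpa using (hq q hq').1
    · ext q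
      by_cases hq' : q = p
      · subst hq'; simp [Finsupp.single_eq_same, h2]
      · simp [Finsupp.single_apply, Ne.symm hq', (hq q hq').2]
  · right
    constructor
    · ext q
      by_cases hq' : q = p
      · subst hq'; simp [Finsupp.single_eq_same, h1]
      · simp [Finsupp.single_apply, Ne.symm hq', (hq q hq').1]
    · ext q
      by_cases hq' : q = p
      · subst hq'; simpa using h2
      · simpa using (hq q hq').2

lemma antidiag_pair (p : Pt) :
    Finset.HasAntidiagonal.antidiagonal (Finsupp.single p 1 : Expv) =
      {((0 : Expv), (Finsupp.single p 1 : Expv)), ((Finsupp.single p 1 : Expv), 0)} := by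
  ext x
  simp only [Finset.HasAntidiagonal.mem_antidiagonal, Finset.mem_insert, Finset.mem_singleton]
  constructor
  · intro h
    rcases add_eq_single_cases h with ⟨h1, h2⟩ | ⟨h1, h2⟩
    · left; exact Prod.ext h1 h2
    · right; exact Prod.ext h1 h2
  · rintro (rfl | rfl) <;> simp

end Helpers
section Eval

variable (A : Fin 3 → ℕ) (c : Expv → ℕ → ℂ)

lemma der_pt (i₁ i₂ i₃ : Fin 3) (j₁ j₂ j₃ : ℕ) (β : Expv) :
    der A c (.pt i₁ j₁) (.pt i₂ j₂) (.pt i₃ j₃) β 0 =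
      ((dfac β [(i₁, j₁), (i₂, j₂), (i₃, j₃)] : ℕ) : ℂ) *
        c (β + (Finsupp.single (i₁, j₁) 1 +
            (Finsupp.single (i₂, j₂) 1 + Finsupp.single (i₃, j₃) 1))) 0 := by
  simp [der, ptsOf, muCount]

lemma der_mu_left (d e' : Idx) (β : Expv) (hd : d ≠ .one) (he : e' ≠ .one) :
    der A c .mu d e' β 0 = 0 := by
  simp [der, muCount, hd, he]

lemma der_mu_right (a b : Idx) (β : Expv) (ha : a ≠ .one) (hb : b ≠ .one) :
    der A c a b .mu β 0 = 0 := by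
  rw [der]
  simp only [ha, hb, if_false, reduceCtorEq]
  simp [muCount]

lemma quad_eval (ia ib id ie : Fin 3) (ja jb jd je : ℕ) (β : Expv) :
    quadTerm A c (.pt ia ja) (.pt ib jb) (.pt id jd) (.pt ie je) β 0 =
    ∑ x ∈ Finset.HasAntidiagonal.antidiagonal β, ∑ i : Fin 3, ∑ j ∈ Finset.Icc 1 (A i - 1),
      (A i : ℂ) *
        (((dfac x.1 [(ia, ja), (ib, jb), (i, j)] : ℕ) : ℂ) *
          c (x.1 + (Finsupp.single (ia, ja) 1 +
              (Finsupp.single (ib, jb) 1 + Finsupp.single (i, j) 1))) 0) *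
        (((dfac x.2 [(i, A i - j), (id, jd), (ie, je)] : ℕ) : ℂ) *
          c (x.2 + (Finsupp.single (i, A i - j) 1 +
              (Finsupp.single (id, jd) 1 + Finsupp.single (ie, je) 1))) 0) := by
  unfold quadTerm
  rw [Finset.Nat.antidiagonal_zero]
  refine Finset.sum_congr rfl fun x _ => ?_
  rw [Finset.sum_singleton]
  rw [der_mu_left A c (.pt id jd) (.pt ie je) x.2 (by simp) (by simp)]
  rw [der_mu_right A c (.pt ia ja) (.pt ib jb) x.1 (by simp) (by simp)]
  rw [mul_zero, zero_mul, zero_add, zero_add]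
  refine Finset.sum_congr rfl fun i _ => Finset.sum_congr rfl fun j _ => ?_
  rw [der_pt, der_pt]

end Eval
section Cubic

variable {A : Fin 3 → ℕ} {c : Expv → ℕ → ℂ}

lemma cubic_mixed (hcub : CubicValues A c) (i₁ i₂ i₃ : Fin 3) (j₁ j₂ j₃ : ℕ)
    (hv₁ : ValidPt A (i₁, j₁)) (hv₂ : ValidPt A (i₂, j₂)) (hv₃ : ValidPt A (i₃, j₃))
    (h : ¬(i₁ = i₂ ∧ i₂ = i₃)) :
    c (Finsupp.single (i₁, j₁) 1 +
        (Finsupp.single (i₂, j₂) 1 + Finsupp.single (i₃, j₃) 1)) 0 = 0 := by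
  have := hcub.1 i₁ i₂ i₃ j₁ j₂ j₃ hv₁ hv₂ hv₃ h
  simpa [e, add_assoc] using this

lemma cubic_same_zero (hcub : CubicValues A c) (i : Fin 3) (j₁ j₂ j₃ : ℕ)
    (hv₁ : ValidPt A (i, j₁)) (hv₂ : ValidPt A (i, j₂)) (hv₃ : ValidPt A (i, j₃))
    (h : j₁ + j₂ + j₃ ≠ A i) :
    c (Finsupp.single (i, j₁) 1 +
        (Finsupp.single (i, j₂) 1 + Finsupp.single (i, j₃) 1)) 0 = 0 := by
  have h2 := hcub.2 i j₁ j₂ j₃ hv₁ hv₂ hv₃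
  rw [if_neg h] at h2
  have h3 := (mul_eq_zero.mp h2).resolve_left (sFactor_ne_zero j₁ j₂ j₃)
  simpa [e, add_assoc] using h3

lemma cubic_same_ne_zero (hcub : CubicValues A c) (i : Fin 3) (j₁ j₂ j₃ : ℕ)
    (hv₁ : ValidPt A (i, j₁)) (hv₂ : ValidPt A (i, j₂)) (hv₃ : ValidPt A (i, j₃))
    (h : j₁ + j₂ + j₃ = A i) (hA : A i ≠ 0) :
    c (Finsupp.single (i, j₁) 1 +
        (Finsupp.single (i, j₂) 1 + Finsupp.single (i, j₃) 1)) 0 ≠ 0 := by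
  have h2 := hcub.2 i j₁ j₂ j₃ hv₁ hv₂ hv₃
  rw [if_pos h] at h2
  intro h0
  rw [show (e i j₁ + e i j₂ + e i j₃ : Expv) = Finsupp.single (i, j₁) 1 +
      (Finsupp.single (i, j₂) 1 + Finsupp.single (i, j₃) 1) by simp [e, add_assoc]] at h2
  rw [h0, mul_zero] at h2
  exact inv_ne_zero (Nat.cast_ne_zero.mpr hA) h2.symm

lemma valid_single {i : Fin 3} {j : ℕ} (hv : ValidPt A (i, j)) :
    Valid A (Finsupp.single (i, j) 1 : Expv) := by
  intro p hp
  rcases Finsupp.mem_support_iff.mp hp with h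
  by_cases hq : p = (i, j)
  · subst hq; exact hv
  · exfalso
    rw [Finsupp.single_apply, if_neg (fun hc => hq hc.symm)] at h
    exact h rfl

lemma validPt_mk {A : Fin 3 → ℕ} {i : Fin 3} {j : ℕ} (h1 : 1 ≤ j) (h2 : j ≤ A i - 1) :
    ValidPt A (i, j) := ⟨h1, h2⟩

end Cubic
section Degree

variable {A : Fin 3 → ℕ}

lemma deg_add (α β : Expv) : deg A (α + β) = deg A α + deg A β := by
  unfold deg
  exact Finsupp.sum_add_index' (fun p => by simp) (fun p b₁ b₂ => by push_cast; ring)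

lemma deg_e (i : Fin 3) (j : ℕ) : deg A (e i j) = ((A i : ℚ) - j) / (A i : ℚ) := by
  unfold deg e
  rw [Finsupp.sum_single_index (by simp)]
  simp

lemma valid_quartic {i₁ i₂ : Fin 3} {j₁ j₁' j₂ j₂' : ℕ}
    (hv₁ : ValidPt A (i₁, j₁)) (hv₁' : ValidPt A (i₁, j₁'))
    (hv₂ : ValidPt A (i₂, j₂)) (hv₂' : ValidPt A (i₂, j₂')) :
    Valid A (e i₁ j₁ + e i₁ j₁' + e i₂ j₂ + e i₂ j₂') := by
  intro p hp
  have h := Finsupp.mem_support_iff.mp hp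
  by_cases h1 : p = (i₁, j₁); · subst h1; exact hv₁
  by_cases h2 : p = (i₁, j₁'); · subst h2; exact hv₁'
  by_cases h3 : p = (i₂, j₂); · subst h3; exact hv₂
  by_cases h4 : p = (i₂, j₂'); · subst h4; exact hv₂'
  exfalso
  simp only [e, Finsupp.add_apply, Finsupp.single_apply] at h
  rw [if_neg (fun hc => h1 hc.symm), if_neg (fun hc => h2 hc.symm),
    if_neg (fun hc => h3 hc.symm), if_neg (fun hc => h4 hc.symm)] at h
  exact h rfl

end Degree
section Relations

lemma relationB (A : Fin 3 → ℕ) (c : Expv → ℕ → ℂ)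
    (hadm : IsAdmissible A c) (hcub : CubicValues A c)
    (i₁ i₂ : Fin 3) (hne : i₁ ≠ i₂) (j₁ j₁' j₂ j₂' : ℕ)
    (hv₁ : ValidPt A (i₁, j₁)) (hv₁' : ValidPt A (i₁, j₁'))
    (hv₂ : ValidPt A (i₂, j₂)) (hv₂' : ValidPt A (i₂, j₂'))
    (hj₁' : 2 ≤ j₁') (hk : A i₂ ≤ j₂ + j₂') :
    c (e i₁ j₁ + e i₁ j₁' + e i₂ j₂ + e i₂ j₂') 0 = 0 := by
  have h1a : 1 ≤ j₁ := hv₁.1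
  have h1b : j₁ ≤ A i₁ - 1 := hv₁.2
  have h1a' : 1 ≤ j₁' := hv₁'.1
  have h1b' : j₁' ≤ A i₁ - 1 := hv₁'.2
  have h2a : 1 ≤ j₂ := hv₂.1
  have h2b : j₂ ≤ A i₂ - 1 := hv₂.2
  have h2a' : 1 ≤ j₂' := hv₂'.1
  have h2b' : j₂' ≤ A i₂ - 1 := hv₂'.2
  have hA1 : 3 ≤ A i₁ := by omega
  have hA2 : 2 ≤ A i₂ := by omega
  have hva : ValidPt A (i₁, 1) := validPt_mk (le_refl 1) (by omega)
  have hvb : ValidPt A (i₁, j₁' - 1) := validPt_mk (by omega) (by omega)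
  have hw := hadm.wdvv (.pt i₁ 1) (.pt i₁ (j₁' - 1)) (.pt i₂ j₂) (.pt i₂ j₂')
    hva hvb hv₂ hv₂' (Finsupp.single (i₁, j₁) 1) (valid_single hv₁) 0
  -- the RHS of WDVV vanishes
  have hrhs : quadTerm A c (.pt i₁ 1) (.pt i₂ j₂) (.pt i₁ (j₁' - 1)) (.pt i₂ j₂')
      (Finsupp.single (i₁, j₁) 1) 0 = 0 := by
    rw [quad_eval]
    refine Finset.sum_eq_zero fun x hx => ?_
    refine Finset.sum_eq_zero fun i _ => ?_
    refine Finset.sum_eq_zero fun j hj => ?_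
    rw [Finset.HasAntidiagonal.mem_antidiagonal] at hx
    rw [Finset.mem_Icc] at hj
    have hvij : ValidPt A (i, j) := ⟨hj.1, hj.2⟩
    have hvij' : ValidPt A (i, A i - j) := validPt_mk (by omega) (by omega)
    rcases add_eq_single_cases hx with ⟨hx1, hx2⟩ | ⟨hx1, hx2⟩
    · rw [hx1, zero_add,
        cubic_mixed hcub i₁ i₂ i 1 j₂ j hva hv₂ hvij (fun hc => hne hc.1)]
      simp
    · rw [hx2, zero_add,
        cubic_mixed hcub i i₁ i₂ (A i - j) (j₁' - 1) j₂' hvij' hvb hv₂'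
          (fun hc => hne hc.2)]
      simp
  rw [hrhs] at hw
  -- evaluate the LHS of WDVV
  have hlhs : quadTerm A c (.pt i₁ 1) (.pt i₁ (j₁' - 1)) (.pt i₂ j₂) (.pt i₂ j₂')
      (Finsupp.single (i₁, j₁) 1) 0 =
      (A i₁ : ℂ) *
        (((dfac (0 : Expv) [(i₁, 1), (i₁, j₁' - 1), (i₁, A i₁ - j₁')] : ℕ) : ℂ) *
          c ((0 : Expv) + (Finsupp.single (i₁, 1) 1 +
              (Finsupp.single (i₁, j₁' - 1) 1 + Finsupp.single (i₁, A i₁ - j₁') 1))) 0) *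
        (((dfac (Finsupp.single (i₁, j₁) 1 : Expv)
              [(i₁, A i₁ - (A i₁ - j₁')), (i₂, j₂), (i₂, j₂')] : ℕ) : ℂ) *
          c ((Finsupp.single (i₁, j₁) 1 : Expv) +
              (Finsupp.single (i₁, A i₁ - (A i₁ - j₁')) 1 +
                (Finsupp.single (i₂, j₂) 1 + Finsupp.single (i₂, j₂') 1))) 0) := by
    rw [quad_eval]
    have hsub : ({((0 : Expv), (Finsupp.single (i₁, j₁) 1 : Expv))} : Finset (Expv × Expv)) ⊆
        Finset.HasAntidiagonal.antidiagonal (Finsupp.single (i₁, j₁) 1 : Expv) := by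
      intro x hx
      rw [Finset.mem_singleton] at hx
      subst hx
      exact Finset.HasAntidiagonal.mem_antidiagonal.mpr (by simp)
    refine (Finset.sum_subset hsub ?_).symm.trans ?_
    · intro x hx hxs
      rw [Finset.HasAntidiagonal.mem_antidiagonal] at hx
      rw [Finset.mem_singleton] at hxs
      rcases add_eq_single_cases hx with ⟨hx1, hx2⟩ | ⟨hx1, hx2⟩
      · exact absurd (Prod.ext hx1 hx2) hxs
      · obtain ⟨x1, x2⟩ := x
        simp only at hx1 hx2
        subst hx1; subst hx2
        refine Finset.sum_eq_zero fun i _ => ?_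
        refine Finset.sum_eq_zero fun j hj => ?_
        rw [Finset.mem_Icc] at hj
        have hvij' : ValidPt A (i, A i - j) := validPt_mk (by omega) (by omega)
        dsimp only
        rw [zero_add]
        by_cases hii : i = i₂
        · subst hii
          rw [cubic_same_zero hcub i (A i - j) j₂ j₂' hvij' hv₂ hv₂' (by omega)]
          simp
        · rw [cubic_mixed hcub i i₂ i₂ (A i - j) j₂ j₂' hvij' hv₂ hv₂'
            (fun hc => hii hc.1)]
          simp
    · rw [Finset.sum_singleton]
      refine (Finset.sum_subset (Finset.subset_univ ({i₁} : Finset (Fin 3))) ?_).symm.trans ?_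
      · intro i _ his
        rw [Finset.mem_singleton] at his
        refine Finset.sum_eq_zero fun j hj => ?_
        rw [Finset.mem_Icc] at hj
        have hvij : ValidPt A (i, j) := ⟨hj.1, hj.2⟩
        rw [zero_add,
          cubic_mixed hcub i₁ i₁ i 1 (j₁' - 1) j hva hvb hvij
            (fun hc => his hc.2.symm)]
        simp
      · rw [Finset.sum_singleton]
        have hsubj : ({A i₁ - j₁'} : Finset ℕ) ⊆ Finset.Icc 1 (A i₁ - 1) := by
          intro j hjs
          rw [Finset.mem_singleton] at hjs
          subst hjs
          rw [Finset.mem_Icc]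
          omega
        refine (Finset.sum_subset hsubj ?_).symm.trans ?_
        · intro j hj hjs
          rw [Finset.mem_Icc] at hj
          rw [Finset.mem_singleton] at hjs
          have hvij : ValidPt A (i₁, j) := ⟨hj.1, hj.2⟩
          rw [zero_add,
            cubic_same_zero hcub i₁ 1 (j₁' - 1) j hva hvb hvij (by omega)]
          simp
        · rw [Finset.sum_singleton]
  rw [hlhs] at hw
  rw [zero_add] at hw
  -- extract the conclusion
  have hc1 : c (Finsupp.single (i₁, 1) 1 +
      (Finsupp.single (i₁, j₁' - 1) 1 + Finsupp.single (i₁, A i₁ - j₁') 1)) 0 ≠ 0 :=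
    cubic_same_ne_zero hcub i₁ 1 (j₁' - 1) (A i₁ - j₁') hva hvb (validPt_mk (by omega) (by omega))
      (by omega) (by omega)
  rcases mul_eq_zero.mp hw with h | h
  · rcases mul_eq_zero.mp h with h' | h'
    · exact absurd h' (Nat.cast_ne_zero.mpr (by omega))
    · rcases mul_eq_zero.mp h' with h'' | h''
      · exact absurd h'' (dfac_ne_zero _ _)
      · exact absurd h'' hc1
  · rcases mul_eq_zero.mp h with h' | h'
    · exact absurd h' (dfac_ne_zero _ _)
    · have harg : (Finsupp.single (i₁, j₁) 1 : Expv) +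
          (Finsupp.single (i₁, A i₁ - (A i₁ - j₁')) 1 +
            (Finsupp.single (i₂, j₂) 1 + Finsupp.single (i₂, j₂') 1)) =
          e i₁ j₁ + e i₁ j₁' + e i₂ j₂ + e i₂ j₂' := by
        rw [show A i₁ - (A i₁ - j₁') = j₁' by omega]
        simp only [e]
        abel
      rw [harg] at h'
      exact h'

end Relations
section RelationA

lemma relationA (A : Fin 3 → ℕ) (c : Expv → ℕ → ℂ)
    (hadm : IsAdmissible A c) (hcub : CubicValues A c)
    (i₁ i₂ : Fin 3) (hne : i₁ ≠ i₂) (j₁ j₁' j₂ j₂' : ℕ)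
    (hv₁ : ValidPt A (i₁, j₁)) (hv₁' : ValidPt A (i₁, j₁'))
    (hv₂ : ValidPt A (i₂, j₂)) (hv₂' : ValidPt A (i₂, j₂'))
    (hsum : A i₁ + 1 ≤ j₁ + j₁') :
    c (e i₁ j₁ + e i₁ j₁' + e i₂ j₂ + e i₂ j₂') 0 = 0 := by
  have h1a : 1 ≤ j₁ := hv₁.1
  have h1b : j₁ ≤ A i₁ - 1 := hv₁.2
  have h1a' : 1 ≤ j₁' := hv₁'.1
  have h1b' : j₁' ≤ A i₁ - 1 := hv₁'.2
  have h2a : 1 ≤ j₂ := hv₂.1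
  have h2b : j₂ ≤ A i₂ - 1 := hv₂.2
  have h2a' : 1 ≤ j₂' := hv₂'.1
  have h2b' : j₂' ≤ A i₂ - 1 := hv₂'.2
  have hA1 : 2 ≤ A i₁ := by omega
  have hA2 : 2 ≤ A i₂ := by omega
  set p := A i₁ - j₁' with hp
  set q := j₁ + j₁' - A i₁ with hq
  have hvp : ValidPt A (i₁, p) := validPt_mk (by omega) (by omega)
  have hvq : ValidPt A (i₁, q) := validPt_mk (by omega) (by omega)
  have hw := hadm.wdvv (.pt i₁ p) (.pt i₁ q) (.pt i₁ j₁') (.pt i₂ j₂')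
    hvp hvq hv₁' hv₂' (Finsupp.single (i₂, j₂) 1) (valid_single hv₂) 0
  -- the RHS of WDVV vanishes
  have hrhs : quadTerm A c (.pt i₁ p) (.pt i₁ j₁') (.pt i₁ q) (.pt i₂ j₂')
      (Finsupp.single (i₂, j₂) 1) 0 = 0 := by
    rw [quad_eval]
    refine Finset.sum_eq_zero fun x hx => ?_
    refine Finset.sum_eq_zero fun i _ => ?_
    refine Finset.sum_eq_zero fun j hj => ?_
    rw [Finset.HasAntidiagonal.mem_antidiagonal] at hx
    rw [Finset.mem_Icc] at hj
    have hvij : ValidPt A (i, j) := ⟨hj.1, hj.2⟩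
    have hvij' : ValidPt A (i, A i - j) := validPt_mk (by omega) (by omega)
    rcases add_eq_single_cases hx with ⟨hx1, hx2⟩ | ⟨hx1, hx2⟩
    · rw [hx1, zero_add]
      by_cases hii : i = i₁
      · subst hii
        rw [cubic_same_zero hcub i p j₁' j hvp hv₁' hvij (by omega)]
        simp
      · rw [cubic_mixed hcub i₁ i₁ i p j₁' j hvp hv₁' hvij
          (fun hc => hii hc.2.symm)]
        simp
    · rw [hx2, zero_add,
        cubic_mixed hcub i i₁ i₂ (A i - j) q j₂' hvij' hvq hv₂'
          (fun hc => hne hc.2)]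
      simp
  rw [hrhs] at hw
  -- evaluate the LHS of WDVV
  have hlhs : quadTerm A c (.pt i₁ p) (.pt i₁ q) (.pt i₁ j₁') (.pt i₂ j₂')
      (Finsupp.single (i₂, j₂) 1) 0 =
      (A i₁ : ℂ) *
        (((dfac (0 : Expv) [(i₁, p), (i₁, q), (i₁, A i₁ - j₁)] : ℕ) : ℂ) *
          c ((0 : Expv) + (Finsupp.single (i₁, p) 1 +
              (Finsupp.single (i₁, q) 1 + Finsupp.single (i₁, A i₁ - j₁) 1))) 0) *
        (((dfac (Finsupp.single (i₂, j₂) 1 : Expv)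
              [(i₁, A i₁ - (A i₁ - j₁)), (i₁, j₁'), (i₂, j₂')] : ℕ) : ℂ) *
          c ((Finsupp.single (i₂, j₂) 1 : Expv) +
              (Finsupp.single (i₁, A i₁ - (A i₁ - j₁)) 1 +
                (Finsupp.single (i₁, j₁') 1 + Finsupp.single (i₂, j₂') 1))) 0) := by
    rw [quad_eval]
    have hsub : ({((0 : Expv), (Finsupp.single (i₂, j₂) 1 : Expv))} : Finset (Expv × Expv)) ⊆
        Finset.HasAntidiagonal.antidiagonal (Finsupp.single (i₂, j₂) 1 : Expv) := by
      intro x hx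
      rw [Finset.mem_singleton] at hx
      subst hx
      exact Finset.HasAntidiagonal.mem_antidiagonal.mpr (by simp)
    refine (Finset.sum_subset hsub ?_).symm.trans ?_
    · intro x hx hxs
      rw [Finset.HasAntidiagonal.mem_antidiagonal] at hx
      rw [Finset.mem_singleton] at hxs
      rcases add_eq_single_cases hx with ⟨hx1, hx2⟩ | ⟨hx1, hx2⟩
      · exact absurd (Prod.ext hx1 hx2) hxs
      · obtain ⟨x1, x2⟩ := x
        simp only at hx1 hx2
        subst hx1; subst hx2
        refine Finset.sum_eq_zero fun i _ => ?_
        refine Finset.sum_eq_zero fun j hj => ?_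
        rw [Finset.mem_Icc] at hj
        have hvij' : ValidPt A (i, A i - j) := validPt_mk (by omega) (by omega)
        dsimp only
        rw [zero_add,
          cubic_mixed hcub i i₁ i₂ (A i - j) j₁' j₂' hvij' hv₁' hv₂'
            (fun hc => hne hc.2)]
        simp
    · rw [Finset.sum_singleton]
      refine (Finset.sum_subset (Finset.subset_univ ({i₁} : Finset (Fin 3))) ?_).symm.trans ?_
      · intro i _ his
        rw [Finset.mem_singleton] at his
        refine Finset.sum_eq_zero fun j hj => ?_
        rw [Finset.mem_Icc] at hj
        have hvij : ValidPt A (i, j) := ⟨hj.1, hj.2⟩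
        rw [zero_add,
          cubic_mixed hcub i₁ i₁ i p q j hvp hvq hvij
            (fun hc => his hc.2.symm)]
        simp
      · rw [Finset.sum_singleton]
        have hsubj : ({A i₁ - j₁} : Finset ℕ) ⊆ Finset.Icc 1 (A i₁ - 1) := by
          intro j hjs
          rw [Finset.mem_singleton] at hjs
          subst hjs
          rw [Finset.mem_Icc]
          omega
        refine (Finset.sum_subset hsubj ?_).symm.trans ?_
        · intro j hj hjs
          rw [Finset.mem_Icc] at hj
          rw [Finset.mem_singleton] at hjs
          have hvij : ValidPt A (i₁, j) := ⟨hj.1, hj.2⟩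
          rw [zero_add,
            cubic_same_zero hcub i₁ p q j hvp hvq hvij (by omega)]
          simp
        · rw [Finset.sum_singleton]
  rw [hlhs] at hw
  rw [zero_add] at hw
  have hc1 : c (Finsupp.single (i₁, p) 1 +
      (Finsupp.single (i₁, q) 1 + Finsupp.single (i₁, A i₁ - j₁) 1)) 0 ≠ 0 :=
    cubic_same_ne_zero hcub i₁ p q (A i₁ - j₁) hvp hvq (validPt_mk (by omega) (by omega))
      (by omega) (by omega)
  rcases mul_eq_zero.mp hw with h | h
  · rcases mul_eq_zero.mp h with h' | h'
    · exact absurd h' (Nat.cast_ne_zero.mpr (by omega))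
    · rcases mul_eq_zero.mp h' with h'' | h''
      · exact absurd h'' (dfac_ne_zero _ _)
      · exact absurd h'' hc1
  · rcases mul_eq_zero.mp h with h' | h'
    · exact absurd h' (dfac_ne_zero _ _)
    · have harg : (Finsupp.single (i₂, j₂) 1 : Expv) +
          (Finsupp.single (i₁, A i₁ - (A i₁ - j₁)) 1 +
            (Finsupp.single (i₁, j₁') 1 + Finsupp.single (i₂, j₂') 1)) =
          e i₁ j₁ + e i₁ j₁' + e i₂ j₂ + e i₂ j₂' := by
        rw [show A i₁ - (A i₁ - j₁) = j₁ by omega]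
        simp only [e]
        abel
      rw [harg] at h'
      exact h'

end RelationA
/-- Sub-Lemma (Step 1-(ii)). -/
theorem step1_ii (A : Fin 3 → ℕ) (hA : ∀ i, 1 ≤ A i) (hA01 : A 0 ≤ A 1) (hA12 : A 1 ≤ A 2)
    (c : Expv → ℕ → ℂ) (hadm : IsAdmissible A c) (hcub : CubicValues A c)
    (i₁ i₂ : Fin 3) (hne : i₁ ≠ i₂) (j₁ j₁' j₂ j₂' : ℕ)
    (hv₁ : ValidPt A (i₁, j₁)) (hv₁' : ValidPt A (i₁, j₁'))
    (hv₂ : ValidPt A (i₂, j₂)) (hv₂' : ValidPt A (i₂, j₂'))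
    (ha : 3 ≤ A i₁) (hj₁' : 2 ≤ j₁') :
    c (e i₁ j₁ + e i₁ j₁' + e i₂ j₂ + e i₂ j₂') 0 = 0 := by
  by_cases hk : A i₂ ≤ j₂ + j₂'
  · exact relationB A c hadm hcub i₁ i₂ hne j₁ j₁' j₂ j₂' hv₁ hv₁' hv₂ hv₂' hj₁' hk
  by_cases hs : A i₁ + 1 ≤ j₁ + j₁'
  · exact relationA A c hadm hcub i₁ i₂ hne j₁ j₁' j₂ j₂' hv₁ hv₁' hv₂ hv₂' hs
  -- homogeneity case: the degree exceeds 2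
  have h1a : 1 ≤ j₁ := hv₁.1
  have h1b : j₁ ≤ A i₁ - 1 := hv₁.2
  have h2a : 1 ≤ j₂ := hv₂.1
  have h2b : j₂ ≤ A i₂ - 1 := hv₂.2
  have h2a' : 1 ≤ j₂' := hv₂'.1
  have h2b' : j₂' ≤ A i₂ - 1 := hv₂'.2
  have hA2 : 2 ≤ A i₂ := by omega
  by_contra hc0
  have hh := hadm.homog _ (valid_quartic hv₁ hv₁' hv₂ hv₂') 0 hc0
  rw [Nat.cast_zero, zero_mul, add_zero] at hh
  rw [deg_add, deg_add, deg_add, deg_e, deg_e, deg_e, deg_e] at hh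
  have ha1 : (0 : ℚ) < (A i₁ : ℚ) := by exact_mod_cast (by omega : 0 < A i₁)
  have ha2 : (0 : ℚ) < (A i₂ : ℚ) := by exact_mod_cast (by omega : 0 < A i₂)
  have key : ((A i₁ : ℚ) - j₁) / (A i₁ : ℚ) + ((A i₁ : ℚ) - j₁') / (A i₁ : ℚ) +
      ((A i₂ : ℚ) - j₂) / (A i₂ : ℚ) + ((A i₂ : ℚ) - j₂') / (A i₂ : ℚ) =
      4 - ((j₁ : ℚ) + (j₁' : ℚ)) / (A i₁ : ℚ) - ((j₂ : ℚ) + (j₂' : ℚ)) / (A i₂ : ℚ) := by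
    field_simp
    ring
  rw [key] at hh
  have hu : ((j₁ : ℚ) + (j₁' : ℚ)) / (A i₁ : ℚ) ≤ 1 := by
    rw [div_le_one ha1]
    exact_mod_cast (by omega : j₁ + j₁' ≤ A i₁)
  have hv : ((j₂ : ℚ) + (j₂' : ℚ)) / (A i₂ : ℚ) < 1 := by
    rw [div_lt_one ha2]
    exact_mod_cast (by omega : j₂ + j₂' < A i₂)
  linarith

end FrobeniusUniqueness
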